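/- Let u₁, u₂, v₁, v₂ ∈ SL(2,ℂ) with tr(u₁) = tr(u₂) = tr(v₁) = tr(v₂) = 2, none of u₁, u₂, v₁, v₂ equal to the identity, and tr(u₁u₂) = tr(v₁v₂) ≠ 2. Then there exists M ∈ SL(2,ℂ) such that conjugation by M carries the subgroup generated by u₁ and u₂ onto the subgroup generated by v₁ and v₂ (indeed M·u₁·M⁻¹, M·u₂·M⁻¹ generate the same subgroup as v₁, v₂). -/

import Mathlib

open Matrix

noncomputable def X : Matrix.SpecialLinearGroup (Fin 2) ℂ :=
  ⟨!![1, 1; 0, 1], by simp [Matrix.det_fin_two_of]⟩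

noncomputable def Y (μ : ℂ) : Matrix.SpecialLinearGroup (Fin 2) ℂ :=
  ⟨!![1, 0; μ, 1], by simp [Matrix.det_fin_two_of]⟩

abbrev SL2 := Matrix.SpecialLinearGroup (Fin 2) ℂ

lemma conj_to_X (u : SL2) (htr : Matrix.trace (u : Matrix (Fin 2) (Fin 2) ℂ) = 2)
    (h1 : u ≠ 1) : ∃ g : SL2, g * u * g⁻¹ = X := by
  set a := (u : Matrix (Fin 2) (Fin 2) ℂ) 0 0 with ha
  set b := (u : Matrix (Fin 2) (Fin 2) ℂ) 0 1 with hb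
  set c := (u : Matrix (Fin 2) (Fin 2) ℂ) 1 0 with hc
  set d := (u : Matrix (Fin 2) (Fin 2) ℂ) 1 1 with hd
  have hu : (u : Matrix (Fin 2) (Fin 2) ℂ) = !![a, b; c, d] := Matrix.eta_fin_two _
  have hdet : a * d - b * c = 1 := by
    have := u.2; rw [Matrix.det_fin_two] at this; exact this
  have htr' : a + d = 2 := by rw [Matrix.trace_fin_two] at htr; exact htr
  by_cases hc0 : c = 0
  · have ha1 : a = 1 := by
      have h2 : (a - 1) ^ 2 = 0 := by linear_combination a * htr' - hdet - b * hc0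
      have := pow_eq_zero_iff (n := 2) (by norm_num) |>.mp h2
      linear_combination this
    have hd1 : d = 1 := by linear_combination htr' - ha1
    have hb0 : b ≠ 0 := by
      intro h
      apply h1
      ext i j
      fin_cases i <;> fin_cases j <;> simp [hu, ha1, hd1, hc0, h]
    obtain ⟨s, hs⟩ := IsAlgClosed.exists_pow_nat_eq (k := ℂ) b (n := 2) (by norm_num)
    have hs0 : s ≠ 0 := by rintro rfl; simp at hs; exact hb0 hs.symm
    refine ⟨(⟨!![s, 0; 0, s⁻¹], by rw [Matrix.det_fin_two_of]; field_simp; simp⟩ : SL2)⁻¹, ?_⟩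
    set gm : SL2 := ⟨!![s, 0; 0, s⁻¹], by rw [Matrix.det_fin_two_of]; field_simp; simp⟩ with hgm
    have key : u * gm = gm * X := by
      ext i j
      rw [Matrix.SpecialLinearGroup.coe_mul, Matrix.SpecialLinearGroup.coe_mul]
      simp only [Matrix.SpecialLinearGroup.coe_mul, hu, X, hgm]
      fin_cases i <;> fin_cases j <;>
          simp [Matrix.mul_fin_two, ha1, hd1, hc0] <;>
        field_simp
      linear_combination -hs
    rw [inv_inv, mul_assoc, key, inv_mul_cancel_left]
  · have hbc : b * c = -(a - 1) ^ 2 := by linear_combination a * htr' - hdet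
    obtain ⟨s, hs⟩ := IsAlgClosed.exists_pow_nat_eq (k := ℂ) (-c) (n := 2) (by norm_num)
    have hs0 : s ≠ 0 := by rintro rfl; simp at hs; exact hc0 hs
    have hdg : Matrix.det !![(a - 1) / s, 1 / s; c / s, 0] = 1 := by
      rw [Matrix.det_fin_two_of]; field_simp; linear_combination -hs
    refine ⟨(⟨!![(a - 1) / s, 1 / s; c / s, 0], hdg⟩ : SL2)⁻¹, ?_⟩
    set gm : SL2 := ⟨!![(a - 1) / s, 1 / s; c / s, 0], hdg⟩ with hgm
    have key : u * gm = gm * X := by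
      ext i j
      rw [Matrix.SpecialLinearGroup.coe_mul, Matrix.SpecialLinearGroup.coe_mul]
      simp only [Matrix.SpecialLinearGroup.coe_mul, hu, X, hgm]
      fin_cases i <;> fin_cases j
      · simp [Matrix.mul_fin_two]; field_simp; linear_combination hbc
      · simp [Matrix.mul_fin_two]; field_simp; try ring
      · simp [Matrix.mul_fin_two]; field_simp; linear_combination htr'
      · simp [Matrix.mul_fin_two]; field_simp
    rw [inv_inv, mul_assoc, key, inv_mul_cancel_left]

lemma trace_conj (g u : SL2) :
    Matrix.trace ((g * u * g⁻¹ : SL2) : Matrix (Fin 2) (Fin 2) ℂ) =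
      Matrix.trace ((u : SL2) : Matrix (Fin 2) (Fin 2) ℂ) := by
  have h : ((g * u * g⁻¹ : SL2) : Matrix (Fin 2) (Fin 2) ℂ) =
      (g : Matrix (Fin 2) (Fin 2) ℂ) * u * (g⁻¹ : SL2) := by simp
  rw [h, Matrix.trace_mul_comm, ← Matrix.mul_assoc, ← Matrix.SpecialLinearGroup.coe_mul,
    inv_mul_cancel, Matrix.SpecialLinearGroup.coe_one, Matrix.one_mul]

lemma pair_conj (u₁ u₂ : SL2)
    (h₁ : Matrix.trace (u₁ : Matrix (Fin 2) (Fin 2) ℂ) = 2)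
    (h₂ : Matrix.trace (u₂ : Matrix (Fin 2) (Fin 2) ℂ) = 2)
    (h₁1 : u₁ ≠ 1)
    (hne : Matrix.trace ((u₁ * u₂ : SL2) : Matrix (Fin 2) (Fin 2) ℂ) ≠ 2) :
    ∃ g : SL2, g * u₁ * g⁻¹ = X ∧
      g * u₂ * g⁻¹ = Y (Matrix.trace ((u₁ * u₂ : SL2) : Matrix (Fin 2) (Fin 2) ℂ) - 2) := by
  obtain ⟨g₀, hg₀⟩ := conj_to_X u₁ h₁ h₁1
  set w : SL2 := g₀ * u₂ * g₀⁻¹ with hw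
  set t := Matrix.trace ((u₁ * u₂ : SL2) : Matrix (Fin 2) (Fin 2) ℂ) with ht
  set a := (w : Matrix (Fin 2) (Fin 2) ℂ) 0 0 with ha
  set b := (w : Matrix (Fin 2) (Fin 2) ℂ) 0 1 with hb
  set c := (w : Matrix (Fin 2) (Fin 2) ℂ) 1 0 with hcc
  set d := (w : Matrix (Fin 2) (Fin 2) ℂ) 1 1 with hd
  have hwm : (w : Matrix (Fin 2) (Fin 2) ℂ) = !![a, b; c, d] := Matrix.eta_fin_two _
  have hdet : a * d - b * c = 1 := by
    have := w.2; rw [Matrix.det_fin_two] at this; exact this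
  have htrw : a + d = 2 := by
    have := trace_conj g₀ u₂
    rw [h₂] at this
    rw [← this, hwm, Matrix.trace_fin_two] at *
    exact this
  have hXw : X * w = g₀ * (u₁ * u₂) * g₀⁻¹ := by rw [← hg₀, hw]; group
  have htX : a + c + d = t := by
    have h5 : Matrix.trace ((X * w : SL2) : Matrix (Fin 2) (Fin 2) ℂ) = t := by
      rw [hXw, trace_conj]
    rw [Matrix.SpecialLinearGroup.coe_mul, hwm] at h5
    rw [show ((X : SL2) : Matrix (Fin 2) (Fin 2) ℂ) = !![1,1;0,1] from rfl] at h5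
    rw [Matrix.mul_fin_two, Matrix.trace_fin_two] at h5
    simp at h5
    linear_combination h5
  have hc0 : c ≠ 0 := by
    intro h
    apply hne
    rw [← htX, h]
    linear_combination htrw
  have hct : c = t - 2 := by linear_combination htX - htrw
  have hbc : b * c = -(a - 1) ^ 2 := by linear_combination a * htrw - hdet
  have hdh : Matrix.det !![1, (1 - a) / c; 0, 1] = 1 := by simp
  set h : SL2 := ⟨!![1, (1 - a) / c; 0, 1], hdh⟩ with hh
  refine ⟨h * g₀, ?_, ?_⟩
  · have e : h * g₀ * u₁ * (h * g₀)⁻¹ = h * (g₀ * u₁ * g₀⁻¹) * h⁻¹ := by group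
    rw [e, hg₀]
    have key : h * X = X * h := by
      ext i j
      rw [Matrix.SpecialLinearGroup.coe_mul, Matrix.SpecialLinearGroup.coe_mul]
      simp only [Matrix.SpecialLinearGroup.coe_mul, X, hh]
      fin_cases i <;> fin_cases j <;> simp [Matrix.mul_fin_two] <;> ring
    rw [key, mul_assoc, mul_inv_cancel, mul_one]
  · have e : h * g₀ * u₂ * (h * g₀)⁻¹ = h * w * h⁻¹ := by rw [hw]; group
    rw [e]
    have key : h * w = Y (t - 2) * h := by
      ext i j
      rw [Matrix.SpecialLinearGroup.coe_mul h w, Matrix.SpecialLinearGroup.coe_mul (Y (t - 2)) h]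
      simp only [Matrix.SpecialLinearGroup.coe_mul, Y, hh, hwm]
      fin_cases i <;> fin_cases j <;> simp [Matrix.mul_fin_two] <;>
        try field_simp
      all_goals first
        | linear_combination hbc + (1 - a) * htrw
        | exact hct
        | (rw [← hct]; linear_combination c * htrw)
        | ring
    rw [key, mul_assoc, mul_inv_cancel, mul_one]

/-- Two groups generated by pairs of nontrivial parabolics whose products have the same
trace ≠ 2 are conjugate in SL(2,ℂ). -/
theorem parabolic_pairs_conjugate (u₁ u₂ v₁ v₂ : Matrix.SpecialLinearGroup (Fin 2) ℂ)
    (hu₁ : Matrix.trace (u₁ : Matrix (Fin 2) (Fin 2) ℂ) = 2)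
    (hu₂ : Matrix.trace (u₂ : Matrix (Fin 2) (Fin 2) ℂ) = 2)
    (hv₁ : Matrix.trace (v₁ : Matrix (Fin 2) (Fin 2) ℂ) = 2)
    (hv₂ : Matrix.trace (v₂ : Matrix (Fin 2) (Fin 2) ℂ) = 2)
    (hu₁1 : u₁ ≠ 1) (hu₂1 : u₂ ≠ 1) (hv₁1 : v₁ ≠ 1) (hv₂1 : v₂ ≠ 1)
    (htr : Matrix.trace ((u₁ * u₂ : Matrix.SpecialLinearGroup (Fin 2) ℂ) :
        Matrix (Fin 2) (Fin 2) ℂ) =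
      Matrix.trace ((v₁ * v₂ : Matrix.SpecialLinearGroup (Fin 2) ℂ) :
        Matrix (Fin 2) (Fin 2) ℂ))
    (hne : Matrix.trace ((u₁ * u₂ : Matrix.SpecialLinearGroup (Fin 2) ℂ) :
        Matrix (Fin 2) (Fin 2) ℂ) ≠ 2) :
    ∃ M : Matrix.SpecialLinearGroup (Fin 2) ℂ,
      Subgroup.closure ({M * u₁ * M⁻¹, M * u₂ * M⁻¹} :
          Set (Matrix.SpecialLinearGroup (Fin 2) ℂ)) =
        Subgroup.closure ({v₁, v₂} : Set (Matrix.SpecialLinearGroup (Fin 2) ℂ)) := by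
  obtain ⟨g, hg1, hg2⟩ := pair_conj u₁ u₂ hu₁ hu₂ hu₁1 hne
  have hne' : Matrix.trace ((v₁ * v₂ : SL2) : Matrix (Fin 2) (Fin 2) ℂ) ≠ 2 := htr ▸ hne
  obtain ⟨k, hk1, hk2⟩ := pair_conj v₁ v₂ hv₁ hv₂ hv₁1 hne'
  rw [← htr] at hk2
  refine ⟨k⁻¹ * g, ?_⟩
  have e1 : k⁻¹ * g * u₁ * (k⁻¹ * g)⁻¹ = v₁ := by
    have : k⁻¹ * g * u₁ * (k⁻¹ * g)⁻¹ = k⁻¹ * (g * u₁ * g⁻¹) * k := by group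
    rw [this, hg1, ← hk1]
    group
  have e2 : k⁻¹ * g * u₂ * (k⁻¹ * g)⁻¹ = v₂ := by
    have : k⁻¹ * g * u₂ * (k⁻¹ * g)⁻¹ = k⁻¹ * (g * u₂ * g⁻¹) * k := by group
    rw [this, hg2, ← hk2]
    group
  rw [e1, e2]
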